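/- Let V be an oriented 4-dimensional real vector space with inner product g, and ρ a 2-form with ρ∧ρ > 0. Set u := (|ρ⁺|² - |ρ⁻|²)/2 where ρ± are the self-dual and anti-self-dual parts of ρ, and define Θ := (*ρ)/u - (1/2)|ρ/u|²ρ. Then Θ∧ρ = 0, Θ = (2ρ⁺)/u - |ρ⁺/u|²ρ = -(|ρ⁻|²ρ⁺ + |ρ⁺|²ρ⁻)/u², and Θ∧Θ = -(2|ρ⁺|²|ρ⁻|²/u³)·dvol_g. -/

import Mathlib

open Matrix MeasureTheory

noncomputable section

/-- Vectors in ℝ⁴. -/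
abbrev V4 : Type := Fin 4 → ℝ

/-- 2-forms on ℝ⁴, represented by their (antisymmetric) coefficient matrices. -/
abbrev Mat4 : Type := Matrix (Fin 4) (Fin 4) ℝ

/-- The wedge product of two 2-forms, as the coefficient of dx0∧dx1∧dx2∧dx3. -/
def w22 (A B : Mat4) : ℝ :=
  A 0 1 * B 2 3 - A 0 2 * B 1 3 + A 0 3 * B 1 2 +
  A 2 3 * B 0 1 - A 1 3 * B 0 2 + A 1 2 * B 0 3

/-- The wedge product of a 1-form and a 3-form (3-forms are written in the
basis σ_m = ι(e_m)(dx0∧dx1∧dx2∧dx3)), as a multiple of dx0∧dx1∧dx2∧dx3. -/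
def w13 (l b : V4) : ℝ := l ⬝ᵥ b

/-- The wedge product of a 2-form and a 1-form, as a 3-form in the basis σ_m. -/
def w21 (A : Mat4) (l : V4) : V4 :=
  ![A 1 2 * l 3 - A 1 3 * l 2 + A 2 3 * l 1,
    -(A 0 2 * l 3 - A 0 3 * l 2 + A 2 3 * l 0),
    A 0 1 * l 3 - A 0 3 * l 1 + A 1 3 * l 0,
    -(A 0 1 * l 2 - A 0 2 * l 1 + A 1 2 * l 0)]

/-- Interior product of a vector with a 2-form. -/
def iota2 (v : V4) (A : Mat4) : V4 := Aᵀ.mulVec v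

/-- Interior product of a vector with a 4-form c·dx0∧dx1∧dx2∧dx3. -/
def iota4 (v : V4) (c : ℝ) : V4 := c • v

/-- The metric volume form of the inner product with Gram matrix G, as a
multiple of dx0∧dx1∧dx2∧dx3 (standard orientation). -/
def volScalar (G : Mat4) : ℝ := Real.sqrt G.det

/-- The inner product with Gram matrix G. -/
def bilin (G : Mat4) (v w : V4) : ℝ := v ⬝ᵥ G.mulVec w

/-- The induced inner product on 1-forms. -/
def ip1 (G : Mat4) (l m : V4) : ℝ := l ⬝ᵥ G⁻¹.mulVec m

/-- The induced inner product on 2-forms. -/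
def ip2 (G : Mat4) (A B : Mat4) : ℝ := (1 / 2) * (Aᵀ * G⁻¹ * B * G⁻¹).trace

/-- The wedge-duality involution on 2-forms (the Hodge star of the standard
metric), characterized by w22 A (dual2 B) = ip2 1 A B. -/
def dual2 (A : Mat4) : Mat4 :=
  !![0, A 2 3, -(A 1 3), A 1 2;
     -(A 2 3), 0, A 0 3, -(A 0 2);
     A 1 3, -(A 0 3), 0, A 0 1;
     -(A 1 2), A 0 2, -(A 0 1), 0]

/-- The Hodge star on 2-forms of the metric with Gram matrix G,
characterized by α ∧ (hodge2 G β) = ⟨α,β⟩_G dvol_G. -/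
def hodge2 (G : Mat4) (A : Mat4) : Mat4 := volScalar G • dual2 (G⁻¹ * A * G⁻¹)

/-- The Hodge star Λ¹ → Λ³ of G, characterized by λ ∧ (hodge1 G μ) = ⟨λ,μ⟩_G dvol_G. -/
def hodge1 (G : Mat4) (m : V4) : V4 := volScalar G • G⁻¹.mulVec m

/-- The Hodge star Λ³ → Λ¹ of G, characterized by hodge1 G (hodge3 G b) = -b. -/
def hodge3 (G : Mat4) (b : V4) : V4 := -((volScalar G)⁻¹ • G.mulVec b)

/-- A complex structure J (J² = -1) is compatible with the standard orientation. -/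
def posOrient (J : Mat4) : Prop :=
  ∃ v w : V4, 0 < (Matrix.of fun i k => ![v, J.mulVec v, w, J.mulVec w] k i).det

/-- The inner product on 2-forms induced by the standard metric. -/
def ip2std (A B : Mat4) : ℝ := (1 / 2) * (Aᵀ * B).trace

/-- The involution R^ρ of the space of 2-forms determined by a
nondegenerate 2-form ρ (with matrix P). -/
def Rmap (P A : Mat4) : Mat4 := A - (w22 A P / (w22 P P / 2)) • P

/-- The standard hyperKähler triple ω₁ = dx0∧dx1 + dx2∧dx3, etc. -/
def sW1 : Mat4 := !![0,1,0,0; -1,0,0,0; 0,0,0,1; 0,0,-1,0]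
def sW2 : Mat4 := !![0,0,1,0; 0,0,0,-1; -1,0,0,0; 0,1,0,0]
def sW3 : Mat4 := !![0,0,0,1; 0,0,1,0; 0,-1,0,0; -1,0,0,0]

namespace ThetaAux

lemma asym_eta (A : Mat4) (hA : Aᵀ = -A) :
    ∃ a1 a2 a3 a4 a5 a6 : ℝ,
      A = !![0,a1,a2,a3; -a1,0,a4,a5; -a2,-a4,0,a6; -a3,-a5,-a6,0] := by
  refine ⟨A 0 1, A 0 2, A 0 3, A 1 2, A 1 3, A 2 3, ?_⟩
  have h : ∀ i j, A j i = -A i j := fun i j => by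
    have := congrFun (congrFun hA i) j
    simpa [Matrix.transpose_apply] using this
  ext i j
  fin_cases i <;> fin_cases j <;>
    simp [Matrix.cons_val_zero, Matrix.cons_val_one] <;>
    first
      | rfl
      | (rw [show (0:ℝ) = -0 by ring]; nlinarith [h 0 0, h 1 1, h 2 2, h 3 3])
      | (exact h _ _)

lemma sym_eta (M : Mat4) (hM : Mᵀ = M) :
    ∃ m00 m01 m02 m03 m11 m12 m13 m22 m23 m33 : ℝ,
      M = !![m00,m01,m02,m03; m01,m11,m12,m13; m02,m12,m22,m23; m03,m13,m23,m33] := by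
  refine ⟨M 0 0, M 0 1, M 0 2, M 0 3, M 1 1, M 1 2, M 1 3, M 2 2, M 2 3, M 3 3, ?_⟩
  have h : ∀ i j, M j i = M i j := fun i j => by
    have := congrFun (congrFun hM i) j
    simpa [Matrix.transpose_apply] using this
  ext i j
  fin_cases i <;> fin_cases j <;>
    simp [Matrix.cons_val_zero, Matrix.cons_val_one] <;>
    first
      | rfl
      | (exact h _ _)

lemma w22_comm (A B : Mat4) : w22 A B = w22 B A := by simp only [w22]; ring
lemma w22_smul_left (r : ℝ) (A B : Mat4) : w22 (r • A) B = r * w22 A B := by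
  simp only [w22, Matrix.smul_apply, smul_eq_mul]; ring
lemma w22_smul_right (r : ℝ) (A B : Mat4) : w22 A (r • B) = r * w22 A B := by
  simp only [w22, Matrix.smul_apply, smul_eq_mul]; ring
lemma w22_add_left (A B C : Mat4) : w22 (A + B) C = w22 A C + w22 B C := by
  simp only [w22, Matrix.add_apply]; ring
lemma w22_add_right (A B C : Mat4) : w22 A (B + C) = w22 A B + w22 A C := by
  simp only [w22, Matrix.add_apply]; ring
lemma w22_neg_left (A B : Mat4) : w22 (-A) B = -w22 A B := by
  simp only [w22, Matrix.neg_apply]; ring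
lemma w22_neg_right (A B : Mat4) : w22 A (-B) = -w22 A B := by
  simp only [w22, Matrix.neg_apply]; ring

lemma dual2_smul (r : ℝ) (A : Mat4) : dual2 (r • A) = r • dual2 A := by
  ext i j
  fin_cases i <;> fin_cases j <;> simp [dual2, Matrix.smul_apply]

lemma dual2_add (A B : Mat4) : dual2 (A + B) = dual2 A + dual2 B := by
  ext i j
  fin_cases i <;> fin_cases j <;> simp [dual2, Matrix.add_apply] <;> ring

lemma dual2_sub (A B : Mat4) : dual2 (A - B) = dual2 A - dual2 B := by
  ext i j
  fin_cases i <;> fin_cases j <;> simp [dual2, Matrix.sub_apply] <;> ring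

lemma dual2_transpose (A : Mat4) : (dual2 A)ᵀ = -(dual2 A) := by
  ext i j
  fin_cases i <;> fin_cases j <;> simp [dual2]

lemma assemble (Y B : Mat4) (d : ℝ) (hB : Bᵀ = -B)
    (h1 : Y 2 3 = d * B 0 1) (h2 : Y 1 3 = -(d * B 0 2)) (h3 : Y 1 2 = d * B 0 3)
    (h4 : Y 0 3 = d * B 1 2) (h5 : Y 0 2 = -(d * B 1 3)) (h6 : Y 0 1 = d * B 2 3) :
    dual2 Y = d • B := by
  have h : ∀ i j, B j i = -B i j := fun i j => by
    have := congrFun (congrFun hB i) j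
    simpa [Matrix.transpose_apply] using this
  ext i j
  fin_cases i <;> fin_cases j <;>
    simp [dual2, Matrix.smul_apply, h1, h2, h3, h4, h5, h6] <;>
    first
      | exact Or.inr (by nlinarith [h 0 0, h 1 1, h 2 2, h 3 3])
      | (rw [h]; ring)

lemma hodge2_add (G : Mat4) (A B : Mat4) :
    hodge2 G (A + B) = hodge2 G A + hodge2 G B := by
  simp [hodge2, Matrix.mul_add, Matrix.add_mul, dual2_add, smul_add]

lemma hodge2_sub (G : Mat4) (A B : Mat4) :
    hodge2 G (A - B) = hodge2 G A - hodge2 G B := by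
  simp [hodge2, Matrix.mul_sub, Matrix.sub_mul, dual2_sub, smul_sub]

lemma hodge2_smul (G : Mat4) (r : ℝ) (A : Mat4) :
    hodge2 G (r • A) = r • hodge2 G A := by
  rw [hodge2, hodge2, Matrix.mul_smul, Matrix.smul_mul, dual2_smul, smul_comm]

lemma hodge2_transpose (G : Mat4) (A : Mat4) : (hodge2 G A)ᵀ = -(hodge2 G A) := by
  rw [hodge2, Matrix.transpose_smul, dual2_transpose]
  simp

lemma ip2_add_left (G : Mat4) (A B C : Mat4) :
    ip2 G (A + B) C = ip2 G A C + ip2 G B C := by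
  simp only [ip2, Matrix.transpose_add, Matrix.add_mul, Matrix.trace_add]; ring
lemma ip2_add_right (G : Mat4) (A B C : Mat4) :
    ip2 G A (B + C) = ip2 G A B + ip2 G A C := by
  simp only [ip2, Matrix.mul_add, Matrix.add_mul, Matrix.trace_add]; ring
lemma ip2_comm (G : Mat4) (hM : (G⁻¹)ᵀ = G⁻¹) (A B : Mat4) :
    ip2 G A B = ip2 G B A := by
  rw [ip2, ip2]
  congr 1
  rw [← Matrix.trace_transpose]
  rw [show (Aᵀ * G⁻¹ * B * G⁻¹)ᵀ = G⁻¹ᵀ * (Bᵀ * (G⁻¹ᵀ * A)) by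
    simp [Matrix.transpose_mul, Matrix.mul_assoc]]
  rw [hM, Matrix.trace_mul_comm]
  simp [Matrix.mul_assoc]

set_option maxHeartbeats 1000000 in
lemma key (G : Mat4) (hM : (G⁻¹)ᵀ = G⁻¹) (A B : Mat4) (hA : Aᵀ = -A) (hB : Bᵀ = -B) :
    w22 A (hodge2 G B) = ip2 G A B * volScalar G := by
  rw [hodge2, w22_smul_right, ip2, mul_comm ((1:ℝ)/2 * _), hA]
  congr 1
  obtain ⟨a1,a2,a3,a4,a5,a6,hA'⟩ := asym_eta A hA
  obtain ⟨b1,b2,b3,b4,b5,b6,hB'⟩ := asym_eta B hB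
  obtain ⟨m00,m01,m02,m03,m11,m12,m13,m22,m23,m33,hMe⟩ := sym_eta _ hM
  subst hA' hB'
  rw [hMe]
  simp only [w22, dual2, Matrix.mul_apply, Matrix.trace, Matrix.diag, Fin.sum_univ_four,
    Matrix.neg_apply, Matrix.cons_val', Matrix.cons_val_zero, Matrix.cons_val_one,
    Matrix.head_cons, Matrix.empty_val', Matrix.cons_val_fin_one, Matrix.cons_val_two,
    Matrix.cons_val_three, Matrix.tail_cons, Matrix.head_fin_const, Matrix.of_apply]
  ring

lemma det4_sym (m00 m01 m02 m03 m11 m12 m13 m22 m23 m33 : ℝ) :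
    (!![m00,m01,m02,m03; m01,m11,m12,m13; m02,m12,m22,m23; m03,m13,m23,m33] : Mat4).det =
    m00*(m11*(m22*m33-m23*m23) - m12*(m12*m33-m23*m13) + m13*(m12*m23-m22*m13))
    - m01*(m01*(m22*m33-m23*m23) - m12*(m02*m33-m23*m03) + m13*(m02*m23-m22*m03))
    + m02*(m01*(m12*m33-m23*m13) - m11*(m02*m33-m23*m03) + m13*(m02*m13-m12*m03))
    - m03*(m01*(m12*m23-m22*m13) - m11*(m02*m23-m22*m03) + m12*(m02*m13-m12*m03)) := by
  rw [Matrix.det_succ_row_zero]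
  simp [Fin.sum_univ_succ, Matrix.det_fin_three, Matrix.submatrix_apply, Fin.succAbove]
  ring

set_option maxHeartbeats 1000000 in
lemma dual2_dual2 (M B : Mat4) (hM : Mᵀ = M) (hB : Bᵀ = -B) :
    dual2 (M * dual2 (M * B * M) * M) = M.det • B := by
  obtain ⟨b1,b2,b3,b4,b5,b6,hB'⟩ := asym_eta B hB
  obtain ⟨m00,m01,m02,m03,m11,m12,m13,m22,m23,m33,hM'⟩ := sym_eta M hM
  subst hB' hM'
  apply assemble _ _ _ hB <;>
  · rw [det4_sym]
    simp only [dual2, Matrix.mul_apply, Fin.sum_univ_four,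
      Matrix.cons_val', Matrix.cons_val_zero, Matrix.cons_val_one, Matrix.head_cons,
      Matrix.empty_val', Matrix.cons_val_fin_one, Matrix.cons_val_two,
      Matrix.cons_val_three, Matrix.tail_cons, Matrix.head_fin_const, Matrix.of_apply]
    ring

lemma star2 (G : Mat4) (hG2 : (G⁻¹)ᵀ = G⁻¹) (hdet : 0 < G.det) (B : Mat4) (hB : Bᵀ = -B) :
    hodge2 G (hodge2 G B) = B := by
  rw [hodge2, hodge2, Matrix.mul_smul, Matrix.smul_mul, dual2_smul, smul_smul]
  rw [dual2_dual2 _ _ hG2 hB]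
  rw [smul_smul, volScalar, Real.mul_self_sqrt hdet.le]
  have h1 : G⁻¹.det * G.det = 1 :=
    Matrix.det_nonsing_inv_mul_det G (isUnit_iff_ne_zero.mpr hdet.ne')
  rw [mul_comm, h1, one_smul]

end ThetaAux

/-- identities for Θ = (*ρ)/u - ½|ρ/u|²ρ with
u = (|ρ⁺|² - |ρ⁻|²)/2. -/
theorem Theta_identities (G : Mat4) (hG : G.PosDef)
    (P : Mat4) (hP : Pᵀ = -P) (hpos : 0 < w22 P P) :
    let Pp := (2:ℝ)⁻¹ • (P + hodge2 G P)
    let Pm := (2:ℝ)⁻¹ • (P - hodge2 G P)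
    let u := (ip2 G Pp Pp - ip2 G Pm Pm) / 2
    let Θ := u⁻¹ • hodge2 G P - (2⁻¹ * (ip2 G P P / u ^ 2)) • P
    w22 Θ P = 0 ∧
    Θ = (2 / u) • Pp - (ip2 G Pp Pp / u ^ 2) • P ∧
    Θ = -((u ^ 2)⁻¹ • (ip2 G Pm Pm • Pp + ip2 G Pp Pp • Pm)) ∧
    w22 Θ Θ = -(2 * ip2 G Pp Pp * ip2 G Pm Pm / u ^ 3) * volScalar G := by
  intro Pp Pm u Θ
  open ThetaAux in
  have hdet : 0 < G.det := hG.det_pos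
  have hGs : Gᵀ = G := by
    have h := hG.1.eq
    rwa [Matrix.conjTranspose_eq_transpose_of_trivial] at h
  have hM : (G⁻¹)ᵀ = G⁻¹ := by rw [Matrix.transpose_nonsing_inv, hGs]
  have hv : 0 < volScalar G := Real.sqrt_pos.mpr hdet
  have hHPt : (hodge2 G P)ᵀ = -(hodge2 G P) := ThetaAux.hodge2_transpose G P
  have hPpd : Pp = (2:ℝ)⁻¹ • (P + hodge2 G P) := rfl
  have hPmd : Pm = (2:ℝ)⁻¹ • (P - hodge2 G P) := rfl
  have hPpT : Ppᵀ = -Pp := by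
    rw [hPpd, Matrix.transpose_smul, Matrix.transpose_add, hP, hHPt]
    module
  have hPmT : Pmᵀ = -Pm := by
    rw [hPmd, Matrix.transpose_smul, Matrix.transpose_sub, hP, hHPt]
    module
  have hH : hodge2 G P = Pp - Pm := by rw [hPpd, hPmd]; module
  have hPsum : P = Pp + Pm := by rw [hPpd, hPmd]; module
  have hstar2 := ThetaAux.star2 G hM hdet P hP
  have hHPp : hodge2 G Pp = Pp := by
    rw [hPpd, ThetaAux.hodge2_smul, ThetaAux.hodge2_add, hstar2]
    module
  have hHPm : hodge2 G Pm = -Pm := by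
    rw [hPmd, ThetaAux.hodge2_smul, ThetaAux.hodge2_sub, hstar2]
    module
  set a := ip2 G Pp Pp with ha
  set b := ip2 G Pm Pm with hb
  set v := volScalar G with hvdef
  have k_pp : w22 Pp Pp = a * v := by
    have h := ThetaAux.key G hM Pp Pp hPpT hPpT
    rwa [hHPp] at h
  have k_mm : w22 Pm Pm = -(b * v) := by
    have h := ThetaAux.key G hM Pm Pm hPmT hPmT
    rw [hHPm, ThetaAux.w22_neg_right] at h
    linarith
  have k_pm : w22 Pp Pm = 0 ∧ ip2 G Pp Pm = 0 := by
    have h1 := ThetaAux.key G hM Pp Pm hPpT hPmT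
    rw [hHPm, ThetaAux.w22_neg_right] at h1
    have h2 := ThetaAux.key G hM Pm Pp hPmT hPpT
    rw [hHPp] at h2
    have hsym := ThetaAux.w22_comm Pp Pm
    have hisym := ThetaAux.ip2_comm G hM Pp Pm
    constructor <;> nlinarith [hv]
  have k_mp : w22 Pm Pp = 0 := by rw [ThetaAux.w22_comm]; exact k_pm.1
  have hu : u = (a - b)/2 := rfl
  have hw22PP : w22 P P = (a - b) * v := by
    rw [hPsum, ThetaAux.w22_add_left, ThetaAux.w22_add_right, ThetaAux.w22_add_right,
      k_pp, k_mm, k_pm.1, k_mp]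
    ring
  have hupos : 0 < u := by
    rw [hu]
    nlinarith [hpos, hw22PP, hv]
  have hune : u ≠ 0 := ne_of_gt hupos
  have h2u : a - b = 2 * u := by rw [hu]; ring
  have hip2PP : ip2 G P P = a + b := by
    rw [hPsum, ThetaAux.ip2_add_left, ThetaAux.ip2_add_right, ThetaAux.ip2_add_right,
      ← ha, ← hb, k_pm.2, ThetaAux.ip2_comm G hM Pm Pp, k_pm.2]
    ring
  have hΘd : Θ = u⁻¹ • hodge2 G P - (2⁻¹ * (ip2 G P P / u ^ 2)) • P := rfl
  have hΘ3 : Θ = -((u ^ 2)⁻¹ • (b • Pp + a • Pm)) := by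
    rw [hΘd, hH, hip2PP, hPsum]
    match_scalars <;> field_simp <;> linear_combination u * h2u
  have hΘ2 : Θ = (2 / u) • Pp - (a / u ^ 2) • P := by
    rw [hΘd, hH, hip2PP, hPsum]
    match_scalars <;> field_simp <;> linear_combination u * h2u
  refine ⟨?_, hΘ2, hΘ3, ?_⟩
  · rw [hΘ3, hPsum]
    simp only [ThetaAux.w22_neg_left, ThetaAux.w22_neg_right, ThetaAux.w22_smul_left,
      ThetaAux.w22_smul_right, ThetaAux.w22_add_left, ThetaAux.w22_add_right,
      k_pp, k_mm, k_pm.1, k_mp]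
    ring
  · rw [hΘ3]
    simp only [ThetaAux.w22_neg_left, ThetaAux.w22_neg_right, ThetaAux.w22_smul_left,
      ThetaAux.w22_smul_right, ThetaAux.w22_add_left, ThetaAux.w22_add_right,
      k_pp, k_mm, k_pm.1, k_mp]
    field_simp
    linear_combination (a * b * v * u) * h2u
  
end
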